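/- Let λ > 0, μ = √(λ²+1), a > 0 with a ≠ 1, and define X : ℝ² → ℝ³ by X(u,v) = ( cosh(a u)·sin(a v)/a + λ·u , [sinh u·((a²−1)·cos v + sinh(a u)·((aμ + λ)·cos v·sin(a v) − (aλ + μ)·sin v·cos(a v))) + cosh u·cosh(a u)·((aμ + λ)·sin v·cos(a v) − (aλ + μ)·cos v·sin(a v))]/(a²−1) , [cosh u·((a²−1)·cos v + sinh(a u)·((aμ + λ)·cos v·sin(a v) − (aλ + μ)·sin v·cos(a v))) + sinh u·cosh(a u)·((aμ + λ)·sin v·cos(a v) − (aλ + μ)·cos v·sin(a v))]/(a²−1) ). Then: (i) each coordinate function of X is harmonic on ℝ² (∂²X_k/∂u² + ∂²X_k/∂v² = 0); (ii) X is Lorentz-conformal, i.e. ⟨X_u,X_u⟩_L = ⟨X_v,X_v⟩_L and ⟨X_u,X_v⟩_L = 0 everywhere; and (iii) X(u,0) = (λ·u, sinh u, cosh u) for all u ∈ ℝ. -/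

import Mathlib

open Real

/-- Lorentzian inner product on ℝ³: ⟨p,q⟩ = p₁q₁ + p₂q₂ − p₃q₃. -/
noncomputable def lorentz (p q : ℝ × ℝ × ℝ) : ℝ :=
  p.1 * q.1 + p.2.1 * q.2.1 - p.2.2 * q.2.2

/-- First coordinate of the helicoidal helicoid over a helix of type II (spacelike axis). -/
noncomputable def X1 (a lam mu u v : ℝ) : ℝ :=
  cosh (a*u) * sin (a*v) / a + lam * u

/-- Second coordinate of the helicoidal helicoid over a helix of type II (spacelike axis). -/
noncomputable def X2 (a lam mu u v : ℝ) : ℝ :=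
  (sinh u * ((a^2 - 1) * cos v
      + sinh (a*u) * ((a * mu + lam) * cos v * sin (a*v)
        - (a * lam + mu) * sin v * cos (a*v)))
   + cosh u * cosh (a*u) * ((a * mu + lam) * sin v * cos (a*v)
        - (a * lam + mu) * cos v * sin (a*v))) / (a^2 - 1)

/-- Third coordinate of the helicoidal helicoid over a helix of type II (spacelike axis). -/
noncomputable def X3 (a lam mu u v : ℝ) : ℝ :=
  (cosh u * ((a^2 - 1) * cos v
      + sinh (a*u) * ((a * mu + lam) * cos v * sin (a*v)
        - (a * lam + mu) * sin v * cos (a*v)))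
   + sinh u * cosh (a*u) * ((a * mu + lam) * sin v * cos (a*v)
        - (a * lam + mu) * cos v * sin (a*v))) / (a^2 - 1)

/-- Partial derivative of X with respect to u. -/
noncomputable def Xu (a lam mu u v : ℝ) : ℝ × ℝ × ℝ :=
  (deriv (fun s => X1 a lam mu s v) u, deriv (fun s => X2 a lam mu s v) u,
   deriv (fun s => X3 a lam mu s v) u)

/-- Partial derivative of X with respect to v. -/
noncomputable def Xv (a lam mu u v : ℝ) : ℝ × ℝ × ℝ :=
  (deriv (fun t => X1 a lam mu u t) v, deriv (fun t => X2 a lam mu u t) v,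
   deriv (fun t => X3 a lam mu u t) v)


noncomputable def fU (a C al be ga de ep ze et th ka rh : ℝ) : ℝ → ℝ := fun s =>
  (al*(sinh s*sinh (a*s)) + be*(sinh s*cosh (a*s)) + ga*(cosh s*sinh (a*s))
   + de*(cosh s*cosh (a*s)) + ep*sinh s + ze*cosh s + et*sinh (a*s) + th*cosh (a*s)
   + ka*s + rh)/C

noncomputable def fV (a C al be ga de ep ze et th ka rh : ℝ) : ℝ → ℝ := fun t =>
  (al*(sin t*sin (a*t)) + be*(sin t*cos (a*t)) + ga*(cos t*sin (a*t))
   + de*(cos t*cos (a*t)) + ep*sin t + ze*cos t + et*sin (a*t) + th*cos (a*t)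
   + ka*t + rh)/C

lemma masterU (a C al be ga de ep ze et th ka rh u : ℝ) :
    HasDerivAt (fU a C al be ga de ep ze et th ka rh)
      (fU a C (a*be+ga) (a*al+de) (al+a*de) (be+a*ga) ze ep (a*th) (a*et) 0 ka u) u := by
  have hid : HasDerivAt (fun s : ℝ => a*s) a u := by
    simpa using (hasDerivAt_id u).const_mul a
  have hs2 : HasDerivAt (fun s : ℝ => sinh (a*s)) (a * cosh (a*u)) u := by
    simpa [mul_comm, Function.comp_def] using (Real.hasDerivAt_sinh (a*u)).comp u hid
  have hc2 : HasDerivAt (fun s : ℝ => cosh (a*s)) (a * sinh (a*u)) u := by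
    simpa [mul_comm, Function.comp_def] using (Real.hasDerivAt_cosh (a*u)).comp u hid
  have hs1 := Real.hasDerivAt_sinh u
  have hc1 := Real.hasDerivAt_cosh u
  have h :=
    (((((((((((hs1.mul hs2).const_mul al).add ((hs1.mul hc2).const_mul be)).add
      ((hc1.mul hs2).const_mul ga)).add ((hc1.mul hc2).const_mul de)).add
      (hs1.const_mul ep)).add (hc1.const_mul ze)).add (hs2.const_mul et)).add
      (hc2.const_mul th)).add ((hasDerivAt_id u).const_mul ka)).add_const rh).div_const C
  refine h.congr_deriv ?_
  simp only [fU]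
  ring

lemma masterV (a C al be ga de ep ze et th ka rh v : ℝ) :
    HasDerivAt (fV a C al be ga de ep ze et th ka rh)
      (fV a C (-(a*be)-ga) (a*al-de) (al-a*de) (be+a*ga) (-ze) ep (-(a*th)) (a*et) 0 ka v) v := by
  have hid : HasDerivAt (fun t : ℝ => a*t) a v := by
    simpa using (hasDerivAt_id v).const_mul a
  have hs2 : HasDerivAt (fun t : ℝ => sin (a*t)) (a * cos (a*v)) v := by
    simpa [mul_comm, Function.comp_def] using (Real.hasDerivAt_sin (a*v)).comp v hid
  have hc2 : HasDerivAt (fun t : ℝ => cos (a*t)) (-(a * sin (a*v))) v := by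
    have := (Real.hasDerivAt_cos (a*v)).comp v hid
    simpa [mul_comm, Function.comp_def] using this
  have hs1 := Real.hasDerivAt_sin v
  have hc1 := Real.hasDerivAt_cos v
  have h :=
    (((((((((((hs1.mul hs2).const_mul al).add ((hs1.mul hc2).const_mul be)).add
      ((hc1.mul hs2).const_mul ga)).add ((hc1.mul hc2).const_mul de)).add
      (hs1.const_mul ep)).add (hc1.const_mul ze)).add (hs2.const_mul et)).add
      (hc2.const_mul th)).add ((hasDerivAt_id v).const_mul ka)).add_const rh).div_const C
  refine h.congr_deriv ?_
  simp only [fV]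
  ring

lemma derivU (a C al be ga de ep ze et th ka rh : ℝ) :
    deriv (fU a C al be ga de ep ze et th ka rh)
      = fU a C (a*be+ga) (a*al+de) (al+a*de) (be+a*ga) ze ep (a*th) (a*et) 0 ka :=
  funext fun u => (masterU a C al be ga de ep ze et th ka rh u).deriv

lemma derivV (a C al be ga de ep ze et th ka rh : ℝ) :
    deriv (fV a C al be ga de ep ze et th ka rh)
      = fV a C (-(a*be)-ga) (a*al-de) (al-a*de) (be+a*ga) (-ze) ep (-(a*th)) (a*et) 0 ka :=
  funext fun v => (masterV a C al be ga de ep ze et th ka rh v).deriv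

/-- The helicoidal helicoid over a helix of type II is harmonic, Lorentz-conformal, and
contains the helix (λu, sinh u, cosh u). -/
theorem helicoidal_helicoid_spacelike_typeII (a lam mu : ℝ)
    (hlam : 0 < lam) (hmu : mu = Real.sqrt (lam^2 + 1))
    (ha : 0 < a) (ha1 : a ≠ 1) :
    (∀ u v : ℝ,
      deriv (deriv (fun s => X1 a lam mu s v)) u + deriv (deriv (fun t => X1 a lam mu u t)) v = 0 ∧
      deriv (deriv (fun s => X2 a lam mu s v)) u + deriv (deriv (fun t => X2 a lam mu u t)) v = 0 ∧
      deriv (deriv (fun s => X3 a lam mu s v)) u + deriv (deriv (fun t => X3 a lam mu u t)) v = 0) ∧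
    (∀ u v : ℝ,
      lorentz (Xu a lam mu u v) (Xu a lam mu u v) = lorentz (Xv a lam mu u v) (Xv a lam mu u v) ∧
      lorentz (Xu a lam mu u v) (Xv a lam mu u v) = 0) ∧
    (∀ u : ℝ, (X1 a lam mu u 0, X2 a lam mu u 0, X3 a lam mu u 0) = (lam * u, sinh u, cosh u)) := by
  have ha0 : a ≠ 0 := ne_of_gt ha
  have hC : a^2 - 1 ≠ 0 := by
    intro h
    rcases mul_eq_zero.mp (show (a-1)*(a+1) = (0:ℝ) by nlinarith) with h' | h'
    · exact ha1 (by linarith)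
    · linarith
  have h5 : mu^2 = lam^2 + 1 := by
    rw [hmu, sq_sqrt (by positivity)]
  have hai : a * a⁻¹ = 1 := mul_inv_cancel₀ ha0
  have hCi : (a^2-1) * (a^2-1)⁻¹ = 1 := mul_inv_cancel₀ hC
  have e1u : ∀ v : ℝ, (fun s => X1 a lam mu s v)
      = fU a a 0 0 0 0 0 0 0 (sin (a*v)) (a*lam) 0 := by
    intro v; funext s; simp only [X1, fU]; field_simp; ring
  have e1v : ∀ u : ℝ, (fun t => X1 a lam mu u t)
      = fV a a 0 0 0 0 0 0 (cosh (a*u)) 0 0 (a*lam*u) := by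
    intro u; funext t; simp only [X1, fV]; field_simp; ring
  have e2u : ∀ v : ℝ, (fun s => X2 a lam mu s v)
      = fU a (a^2-1) ((a*mu+lam)*cos v*sin (a*v) - (a*lam+mu)*sin v*cos (a*v)) 0 0 ((a*mu+lam)*sin v*cos (a*v) - (a*lam+mu)*cos v*sin (a*v)) ((a^2-1)*cos v) 0 0 0 0 0 := by
    intro v; funext s; simp only [X2, fU]; ring
  have e3u : ∀ v : ℝ, (fun s => X3 a lam mu s v)
      = fU a (a^2-1) 0 ((a*mu+lam)*sin v*cos (a*v) - (a*lam+mu)*cos v*sin (a*v)) ((a*mu+lam)*cos v*sin (a*v) - (a*lam+mu)*sin v*cos (a*v)) 0 0 ((a^2-1)*cos v) 0 0 0 0 := by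
    intro v; funext s; simp only [X3, fU]; ring
  have e2v : ∀ u : ℝ, (fun t => X2 a lam mu u t)
      = fV a (a^2-1) 0 ((a*mu+lam)*(cosh u*cosh (a*u)) - (a*lam+mu)*(sinh u*sinh (a*u)))
          ((a*mu+lam)*(sinh u*sinh (a*u)) - (a*lam+mu)*(cosh u*cosh (a*u))) 0 0
          ((a^2-1)*sinh u) 0 0 0 0 := by
    intro u; funext t; simp only [X2, fV]; ring
  have e3v : ∀ u : ℝ, (fun t => X3 a lam mu u t)
      = fV a (a^2-1) 0 ((a*mu+lam)*(sinh u*cosh (a*u)) - (a*lam+mu)*(cosh u*sinh (a*u)))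
          ((a*mu+lam)*(cosh u*sinh (a*u)) - (a*lam+mu)*(sinh u*cosh (a*u))) 0 0
          ((a^2-1)*cosh u) 0 0 0 0 := by
    intro u; funext t; simp only [X3, fV]; ring
  refine ⟨fun u v => ⟨?_, ?_, ?_⟩, fun u v => ?_, fun u => ?_⟩
  · rw [e1u v, e1v u, derivU, derivU, derivV, derivV]; simp only [fU, fV]; ring
  · rw [e2u v, e2v u, derivU, derivU, derivV, derivV]; simp only [fU, fV]; ring
  · rw [e3u v, e3v u, derivU, derivU, derivV, derivV]; simp only [fU, fV]; ring
  · simp only [Xu, Xv, e1u v, e1v u, e2u v, e2v u, e3u v, e3v u, derivU, derivV]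
    constructor
    · simp only [lorentz, fU, fV]
      linear_combination (norm := ring1)
        ((a^2-1:ℝ)⁻¹)^2 * (((1:ℝ)*(cos v)^2 + (1:ℝ)*(sin v)^2 + (-1:ℝ)*mu^2*(cosh (a*u))^2*(cos v)^2*(sin (a*v))^2 + (-1:ℝ)*mu^2*(cosh (a*u))^2*(sin v)^2*(sin (a*v))^2 + (1:ℝ)*mu^2*(sinh (a*u))^2*(cos v)^2*(cos (a*v))^2 + (1:ℝ)*mu^2*(sinh (a*u))^2*(sin v)^2*(cos (a*v))^2 + (-2:ℝ)*lam*(sinh (a*u))*(cos v)^2*(sin (a*v)) + (-2:ℝ)*lam*(sinh (a*u))*(sin v)^2*(sin (a*v)) + (-1:ℝ)*lam^2*(cosh (a*u))^2*(cos v)^2*(cos (a*v))^2 + (-1:ℝ)*lam^2*(cosh (a*u))^2*(sin v)^2*(cos (a*v))^2 + (1:ℝ)*lam^2*(sinh (a*u))^2*(cos v)^2*(sin (a*v))^2 + (1:ℝ)*lam^2*(sinh (a*u))^2*(sin v)^2*(sin (a*v))^2 + (-2:ℝ)*a^2*(cos v)^2 + (-2:ℝ)*a^2*(sin v)^2 +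 (2:ℝ)*a^2*mu^2*(cosh (a*u))^2*(cos v)^2*(sin (a*v))^2 + (2:ℝ)*a^2*mu^2*(cosh (a*u))^2*(sin v)^2*(sin (a*v))^2 + (-2:ℝ)*a^2*mu^2*(sinh (a*u))^2*(cos v)^2*(cos (a*v))^2 + (-2:ℝ)*a^2*mu^2*(sinh (a*u))^2*(sin v)^2*(cos (a*v))^2 + (4:ℝ)*a^2*lam*(sinh (a*u))*(cos v)^2*(sin (a*v)) + (4:ℝ)*a^2*lam*(sinh (a*u))*(sin v)^2*(sin (a*v)) + (2:ℝ)*a^2*lam^2*(cosh (a*u))^2*(cos v)^2*(cos (a*v))^2 + (2:ℝ)*a^2*lam^2*(cosh (a*u))^2*(sin v)^2*(cos (a*v))^2 + (-2:ℝ)*a^2*lam^2*(sinh (a*u))^2*(cos v)^2*(sin (a*v))^2 + (-2:ℝ)*a^2*lam^2*(sinh (a*u))^2*(sin v)^2*(sin (a*v))^2 + (1:ℝ)*a^4*(cos v)^2 + (1:ℝ)*a^4*(sin v)^2 + (-1:ℝ)*a^4*mu^2*(cosh (a*u))^2*(cos v)^2*(sin (a*v))^2 + (-1:ℝ)*a^4*mu^2*(cosh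 (a*u))^2*(sin v)^2*(sin (a*v))^2 + (1:ℝ)*a^4*mu^2*(sinh (a*u))^2*(cos v)^2*(cos (a*v))^2 + (1:ℝ)*a^4*mu^2*(sinh (a*u))^2*(sin v)^2*(cos (a*v))^2 + (-2:ℝ)*a^4*lam*(sinh (a*u))*(cos v)^2*(sin (a*v)) + (-2:ℝ)*a^4*lam*(sinh (a*u))*(sin v)^2*(sin (a*v)) + (-1:ℝ)*a^4*lam^2*(cosh (a*u))^2*(cos v)^2*(cos (a*v))^2 + (-1:ℝ)*a^4*lam^2*(cosh (a*u))^2*(sin v)^2*(cos (a*v))^2 + (1:ℝ)*a^4*lam^2*(sinh (a*u))^2*(cos v)^2*(sin (a*v))^2 + (1:ℝ)*a^4*lam^2*(sinh (a*u))^2*(sin v)^2*(sin (a*v))^2) * Real.cosh_sq u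
          + ((-1:ℝ)*(cos (a*v))^2 + (-1:ℝ)*mu^2*(cos v)^2*(sin (a*v))^2 + (-1:ℝ)*mu^2*(sin v)^2*(sin (a*v))^2 + (-1:ℝ)*lam^2*(cos v)^2*(cos (a*v))^2 + (-1:ℝ)*lam^2*(sin v)^2*(cos (a*v))^2 + (2:ℝ)*a^2*(cos (a*v))^2 + (2:ℝ)*a^2*mu^2*(cos v)^2*(sin (a*v))^2 + (2:ℝ)*a^2*mu^2*(sin v)^2*(sin (a*v))^2 + (2:ℝ)*a^2*lam^2*(cos v)^2*(cos (a*v))^2 + (2:ℝ)*a^2*lam^2*(sin v)^2*(cos (a*v))^2 + (-1:ℝ)*a^4*(cos (a*v))^2 + (-1:ℝ)*a^4*mu^2*(cos v)^2*(sin (a*v))^2 + (-1:ℝ)*a^4*mu^2*(sin v)^2*(sin (a*v))^2 + (-1:ℝ)*a^4*lam^2*(cos v)^2*(cos (a*v))^2 + (-1:ℝ)*a^4*lam^2*(sin v)^2*(cos (a*v))^2) * Real.cosh_sq (a*u)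
          + ((1:ℝ) + (-1:ℝ)*mu^2*(sin (a*v))^2 + (1:ℝ)*mu^2*(sinh (a*u))^2*(cos (a*v))^2 + (-1:ℝ)*mu^2*(sinh (a*u))^2*(sin (a*v))^2 + (-2:ℝ)*lam*(sinh (a*u))*(sin (a*v)) + (-1:ℝ)*lam^2*(cos (a*v))^2 + (-1:ℝ)*lam^2*(sinh (a*u))^2*(cos (a*v))^2 + (1:ℝ)*lam^2*(sinh (a*u))^2*(sin (a*v))^2 + (-2:ℝ)*a^2 + (2:ℝ)*a^2*mu^2*(sin (a*v))^2 + (-2:ℝ)*a^2*mu^2*(sinh (a*u))^2*(cos (a*v))^2 + (2:ℝ)*a^2*mu^2*(sinh (a*u))^2*(sin (a*v))^2 + (4:ℝ)*a^2*lam*(sinh (a*u))*(sin (a*v)) + (2:ℝ)*a^2*lam^2*(cos (a*v))^2 + (2:ℝ)*a^2*lam^2*(sinh (a*u))^2*(cos (a*v))^2 + (-2:ℝ)*a^2*lam^2*(sinh (a*u))^2*(sin (a*v))^2 + (1:ℝ)*a^4 + (-1:ℝ)*a^4*mu^2*(sin (a*v))^2 + (1:ℝ)*a^4*mu^2*(sinh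 (a*u))^2*(cos (a*v))^2 + (-1:ℝ)*a^4*mu^2*(sinh (a*u))^2*(sin (a*v))^2 + (-2:ℝ)*a^4*lam*(sinh (a*u))*(sin (a*v)) + (-1:ℝ)*a^4*lam^2*(cos (a*v))^2 + (-1:ℝ)*a^4*lam^2*(sinh (a*u))^2*(cos (a*v))^2 + (1:ℝ)*a^4*lam^2*(sinh (a*u))^2*(sin (a*v))^2) * Real.sin_sq_add_cos_sq v
          + ((-1:ℝ) + (-1:ℝ)*(sinh (a*u))^2 + (1:ℝ)*mu^2*(sinh (a*u))^2 + (-1:ℝ)*lam^2 + (-1:ℝ)*lam^2*(sinh (a*u))^2 + (2:ℝ)*a^2 + (2:ℝ)*a^2*(sinh (a*u))^2 + (-2:ℝ)*a^2*mu^2*(sinh (a*u))^2 + (2:ℝ)*a^2*lam^2 + (2:ℝ)*a^2*lam^2*(sinh (a*u))^2 + (-1:ℝ)*a^4 + (-1:ℝ)*a^4*(sinh (a*u))^2 + (1:ℝ)*a^4*mu^2*(sinh (a*u))^2 + (-1:ℝ)*a^4*lam^2 + (-1:ℝ)*a^4*lam^2*(sinh (a*u))^2) * Real.sin_sq_add_cos_sq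 (a*v)
          + ((-1:ℝ)*(sin (a*v))^2 + (1:ℝ)*(sinh (a*u))^2 + (-2:ℝ)*(sinh (a*u))^2*(sin (a*v))^2 + (2:ℝ)*a^2*(sin (a*v))^2 + (-2:ℝ)*a^2*(sinh (a*u))^2 + (4:ℝ)*a^2*(sinh (a*u))^2*(sin (a*v))^2 + (-1:ℝ)*a^4*(sin (a*v))^2 + (1:ℝ)*a^4*(sinh (a*u))^2 + (-2:ℝ)*a^4*(sinh (a*u))^2*(sin (a*v))^2) * h5)
        + ((sinh (a*u)*sin (a*v)+lam)^2 - (cosh (a*u)*cos (a*v))^2)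
          * ((a*a⁻¹+1) * hai - ((a^2-1)*(a^2-1)⁻¹+1) * hCi)
    · simp only [lorentz, fU, fV]
      linear_combination (norm := ring1)
        ((a^2-1:ℝ)⁻¹)^2 * (((-1:ℝ)*mu^2*(sinh (a*u))*(cosh (a*u))*(cos v)^2*(sin (a*v))*(cos (a*v)) + (-1:ℝ)*mu^2*(sinh (a*u))*(cosh (a*u))*(sin v)^2*(sin (a*v))*(cos (a*v)) + (-1:ℝ)*lam*(cosh (a*u))*(cos v)^2*(cos (a*v)) + (-1:ℝ)*lam*(cosh (a*u))*(sin v)^2*(cos (a*v)) + (1:ℝ)*lam^2*(sinh (a*u))*(cosh (a*u))*(cos v)^2*(sin (a*v))*(cos (a*v)) + (1:ℝ)*lam^2*(sinh (a*u))*(cosh (a*u))*(sin v)^2*(sin (a*v))*(cos (a*v)) + (2:ℝ)*a^2*mu^2*(sinh (a*u))*(cosh (a*u))*(cos v)^2*(sin (a*v))*(cos (a*v)) + (2:ℝ)*a^2*mu^2*(sinh (a*u))*(cosh (a*u))*(sin v)^2*(sin (a*v))*(cos (a*v)) + (2:ℝ)*a^2*lam*(cosh (a*u))*(cos v)^2*(cos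 (a*v)) + (2:ℝ)*a^2*lam*(cosh (a*u))*(sin v)^2*(cos (a*v)) + (-2:ℝ)*a^2*lam^2*(sinh (a*u))*(cosh (a*u))*(cos v)^2*(sin (a*v))*(cos (a*v)) + (-2:ℝ)*a^2*lam^2*(sinh (a*u))*(cosh (a*u))*(sin v)^2*(sin (a*v))*(cos (a*v)) + (-1:ℝ)*a^4*mu^2*(sinh (a*u))*(cosh (a*u))*(cos v)^2*(sin (a*v))*(cos (a*v)) + (-1:ℝ)*a^4*mu^2*(sinh (a*u))*(cosh (a*u))*(sin v)^2*(sin (a*v))*(cos (a*v)) + (-1:ℝ)*a^4*lam*(cosh (a*u))*(cos v)^2*(cos (a*v)) + (-1:ℝ)*a^4*lam*(cosh (a*u))*(sin v)^2*(cos (a*v)) + (1:ℝ)*a^4*lam^2*(sinh (a*u))*(cosh (a*u))*(cos v)^2*(sin (a*v))*(cos (a*v)) + (1:ℝ)*a^4*lam^2*(sinh (a*u))*(cosh (a*u))*(sin v)^2*(sin (a*v))*(cos (a*v))) * Real.cosh_sq u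
          + ((-1:ℝ)*mu^2*(sinh (a*u))*(cosh (a*u))*(sin (a*v))*(cos (a*v)) + (-1:ℝ)*lam*(cosh (a*u))*(cos (a*v)) + (1:ℝ)*lam^2*(sinh (a*u))*(cosh (a*u))*(sin (a*v))*(cos (a*v)) + (2:ℝ)*a^2*mu^2*(sinh (a*u))*(cosh (a*u))*(sin (a*v))*(cos (a*v)) + (2:ℝ)*a^2*lam*(cosh (a*u))*(cos (a*v)) + (-2:ℝ)*a^2*lam^2*(sinh (a*u))*(cosh (a*u))*(sin (a*v))*(cos (a*v)) + (-1:ℝ)*a^4*mu^2*(sinh (a*u))*(cosh (a*u))*(sin (a*v))*(cos (a*v)) + (-1:ℝ)*a^4*lam*(cosh (a*u))*(cos (a*v)) + (1:ℝ)*a^4*lam^2*(sinh (a*u))*(cosh (a*u))*(sin (a*v))*(cos (a*v))) * Real.sin_sq_add_cos_sq v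
          + ((-1:ℝ)*(sinh (a*u))*(cosh (a*u))*(sin (a*v))*(cos (a*v)) + (2:ℝ)*a^2*(sinh (a*u))*(cosh (a*u))*(sin (a*v))*(cos (a*v)) + (-1:ℝ)*a^4*(sinh (a*u))*(cosh (a*u))*(sin (a*v))*(cos (a*v))) * h5)
        + ((sinh (a*u)*sin (a*v)+lam) * (cosh (a*u)*cos (a*v)))
          * ((a*a⁻¹+1) * hai - ((a^2-1)*(a^2-1)⁻¹+1) * hCi)
  · refine Prod.ext ?_ (Prod.ext ?_ ?_)
    · simp [X1]
    · simp only [X2]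
      rw [mul_zero, Real.sin_zero, Real.cos_zero]
      field_simp
      ring
    · simp only [X3]
      rw [mul_zero, Real.sin_zero, Real.cos_zero]
      field_simp
      ring
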